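/- Let 0 < d < D be integers, let L₂ be a d-flat in ℝ^D, let w, r₀ > 0 and 0 < ε ≤ 1 satisfy 4w ≤ ε r₀, and let x ∈ ℝ^D satisfy dist(x, L₂) ≤ r₀ + w. Then the Lebesgue volume of the intersection of the tube T(L₂, w) with the closed ball B(x, (1+ε) r₀) satisfies vol(T(L₂,w) ∩ B(x,(1+ε)r₀)) ≥ ω_d · (√ε · r₀)^d · ω_{D−d} · w^{D−d}, where ω_k denotes the Lebesgue volume of the unit ball in ℝ^k. -/

import Mathlib

open MeasureTheory Metric

/-- The tube of width `w` around a set `L`. -/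
def tube {E : Type*} [PseudoMetricSpace E] (L : Set E) (w : ℝ) : Set E :=
  {y | infDist y L ≤ w}

/-- `ω_k`: the Lebesgue volume of the unit Euclidean ball in `ℝᵏ`. -/
noncomputable def unitBallVol (k : ℕ) : ℝ :=
  (volume (closedBall (0 : EuclideanSpace ℝ (Fin k)) 1)).toReal

private lemma tube_arith {eps r₀ w na nm nv : ℝ} (heps : 0 < eps) (heps1 : eps ≤ 1)
    (hw : 0 < w) (hr₀ : 0 < r₀) (hweps : 4 * w ≤ eps * r₀)
    (ha2 : na ^ 2 ≤ eps * r₀ ^ 2) (hm2 : nm ^ 2 ≤ (r₀ + 2 * w) ^ 2) (hv0 : 0 ≤ nv)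
    (hsq : nv ^ 2 = na ^ 2 + nm ^ 2) : nv ≤ (1 + eps) * r₀ := by
  nlinarith [sq_nonneg (nv - (1 + eps) * r₀), mul_pos hr₀ heps, mul_pos hw hr₀,
    mul_nonneg hw.le hw.le, sq_nonneg (eps * r₀ - 4 * w)]

set_option maxHeartbeats 2000000 in
/-- If `4w ≤ ε r₀`, `0 < ε ≤ 1`, and `dist(x, L₂) ≤ r₀ + w`, then the volume of the
intersection of the tube `T(L₂,w)` with the ball `B(x,(1+ε)r₀)` is at least
`ω_d (√ε · r₀)^d · ω_{D−d} w^{D−d}`. -/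
theorem tube_ball_inter_volume_lower_bound (d D : ℕ) (hd : 0 < d) (hdD : d < D)
    (L₂ : AffineSubspace ℝ (EuclideanSpace ℝ (Fin D)))
    (hL₂d : Module.finrank ℝ L₂.direction = d)
    (hL₂ne : (L₂ : Set (EuclideanSpace ℝ (Fin D))).Nonempty)
    (w r₀ ε : ℝ) (hw : 0 < w) (hr₀ : 0 < r₀) (hε : 0 < ε) (hε1 : ε ≤ 1)
    (hwε : 4 * w ≤ ε * r₀)
    (x : EuclideanSpace ℝ (Fin D))
    (hx : infDist x (L₂ : Set (EuclideanSpace ℝ (Fin D))) ≤ r₀ + w) :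
    (volume (tube (L₂ : Set (EuclideanSpace ℝ (Fin D))) w ∩
        closedBall x ((1 + ε) * r₀))).toReal ≥
      unitBallVol d * (Real.sqrt ε * r₀) ^ d * unitBallVol (D - d) * w ^ (D - d) := by
  classical
  haveI : Nonempty L₂ := hL₂ne.to_subtype
  set K : Submodule ℝ (EuclideanSpace ℝ (Fin D)) := L₂.direction with hKdef
  have hKd : Module.finrank ℝ K = d := hL₂d
  have hKod : Module.finrank ℝ (Kᗮ : Submodule ℝ (EuclideanSpace ℝ (Fin D))) = D - d := by
    have h1 := Submodule.finrank_add_finrank_orthogonal K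
    rw [hKd, finrank_euclideanSpace_fin] at h1
    omega
  set p : EuclideanSpace ℝ (Fin D) :=
    (EuclideanGeometry.orthogonalProjection L₂ x : EuclideanSpace ℝ (Fin D)) with hpdef
  have hpL : p ∈ L₂ := (EuclideanGeometry.orthogonalProjection L₂ x).2
  have hxp_mem : x - p ∈ Kᗮ := by
    have h := EuclideanGeometry.vsub_orthogonalProjection_mem_direction_orthogonal L₂ x
    simpa [hpdef] using h
  have hxp : ‖x - p‖ ≤ r₀ + w := by
    have hle : dist x p ≤ infDist x (L₂ : Set (EuclideanSpace ℝ (Fin D))) := by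
      have key : ∀ q ∈ (L₂ : Set (EuclideanSpace ℝ (Fin D))), dist x p ≤ dist x q := by
        intro q hq
        have hpq : p - q ∈ K := by
          have := AffineSubspace.vsub_mem_direction hpL hq
          simpa using this
        have hinner : inner ℝ (x - p) (p - q) = (0 : ℝ) :=
          Submodule.inner_left_of_mem_orthogonal hpq hxp_mem
        have hdecomp : x - q = (x - p) + (p - q) := by abel
        have hsq : ‖x - q‖ ^ 2 = ‖x - p‖ ^ 2 + ‖p - q‖ ^ 2 := by
          rw [hdecomp, norm_add_sq_real, hinner]; ring
        have h1 : dist x p = ‖x - p‖ := by rw [dist_eq_norm]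
        have h2 : dist x q = ‖x - q‖ := by rw [dist_eq_norm]
        rw [h1, h2]
        nlinarith [norm_nonneg (x - p), norm_nonneg (x - q), norm_nonneg (p - q)]
      haveI := hL₂ne.to_subtype
      rw [infDist_eq_iInf]
      exact le_ciInf fun q => key q q.2
    calc dist x p ≤ infDist x (L₂ : Set (EuclideanSpace ℝ (Fin D))) := hle
      _ ≤ r₀ + w := hx
  -- orthonormal bases
  let b₁ : OrthonormalBasis (Fin d) ℝ K := (stdOrthonormalBasis ℝ K).reindex (finCongr hKd)
  let b₂ : OrthonormalBasis (Fin (D - d)) ℝ (Kᗮ : Submodule ℝ (EuclideanSpace ℝ (Fin D))) :=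
    (stdOrthonormalBasis ℝ _).reindex (finCongr hKod)
  let V : Bool → Submodule ℝ (EuclideanSpace ℝ (Fin D)) := fun t => cond t K Kᗮ
  have hVfam : OrthogonalFamily ℝ (fun t => V t) (fun t => (V t).subtypeₗᵢ) := by
    intro i j hij v w
    match i, j with
    | true, true => exact absurd rfl hij
    | false, false => exact absurd rfl hij
    | true, false => exact Submodule.inner_right_of_mem_orthogonal v.2 w.2
    | false, true => exact Submodule.inner_left_of_mem_orthogonal w.2 v.2
  have hint : DirectSum.IsInternal V := by
    rw [hVfam.isInternal_iff]
    have : (⨆ t, V t) = K ⊔ Kᗮ := by rw [iSup_bool_eq]; rfl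
    rw [this, Submodule.sup_orthogonal_of_hasOrthogonalProjection, Submodule.top_orthogonal_eq_bot]
  let fam : ∀ t : Bool, OrthonormalBasis (Fin (cond t d (D - d))) ℝ (V t) := fun t =>
    match t with
    | true => b₁
    | false => b₂
  let b₀ := hint.collectedOrthonormalBasis hVfam fam
  let eidx : (Σ t : Bool, Fin (cond t d (D - d))) ≃ (Fin d ⊕ Fin (D - d)) :=
    { toFun := fun s => match s with
        | ⟨true, i⟩ => Sum.inl i
        | ⟨false, j⟩ => Sum.inr j
      invFun := Sum.elim (fun i => ⟨true, i⟩) (fun j => ⟨false, j⟩)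
      left_inv := by rintro ⟨(_|_), j⟩ <;> rfl
      right_inv := by rintro (i|j) <;> rfl }
  let b : OrthonormalBasis (Fin d ⊕ Fin (D - d)) ℝ (EuclideanSpace ℝ (Fin D)) :=
    b₀.reindex eidx
  have hbmem₁ : ∀ i : Fin d, (b (Sum.inl i) : EuclideanSpace ℝ (Fin D)) ∈ K := by
    intro i
    have h : b (Sum.inl i) = b₀ ⟨true, i⟩ := by
      simp only [b, OrthonormalBasis.coe_reindex, Function.comp_apply]
      rfl
    rw [h]
    exact hint.collectedOrthonormalBasis_mem hVfam fam ⟨true, i⟩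
  have hbmem₂ : ∀ j : Fin (D - d), (b (Sum.inr j) : EuclideanSpace ℝ (Fin D)) ∈ Kᗮ := by
    intro j
    have h : b (Sum.inr j) = b₀ ⟨false, j⟩ := by
      simp only [b, OrthonormalBasis.coe_reindex, Function.comp_apply]
      rfl
    rw [h]
    exact hint.collectedOrthonormalBasis_mem hVfam fam ⟨false, j⟩
  -- the measure preserving map
  set R := Real.sqrt ε * r₀ with hRdef
  have hsε : Real.sqrt ε ^ 2 = ε := Real.sq_sqrt hε.le
  have hR0 : 0 ≤ R := mul_nonneg (Real.sqrt_nonneg _) hr₀.le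
  let Φ : ((Fin d → ℝ) × (Fin (D - d) → ℝ)) → EuclideanSpace ℝ (Fin d ⊕ Fin (D - d)) :=
    fun z => ((MeasurableEquiv.toLp 2 (Fin d ⊕ Fin (D - d) → ℝ)).symm).symm
      ((MeasurableEquiv.sumPiEquivProdPi (fun _ : Fin d ⊕ Fin (D - d) => ℝ)).symm z)
  let Ψ : EuclideanSpace ℝ (Fin d) × EuclideanSpace ℝ (Fin (D - d)) → EuclideanSpace ℝ (Fin D) :=
    fun z => p + b.repr.symm (Φ (((MeasurableEquiv.toLp 2 (Fin d → ℝ)).symm) z.1,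
      ((MeasurableEquiv.toLp 2 (Fin (D - d) → ℝ)).symm) z.2))
  have hΨmp : MeasurePreserving Ψ volume volume := by
    have h0 : MeasurePreserving
        (Prod.map ((MeasurableEquiv.toLp 2 (Fin d → ℝ)).symm)
          ((MeasurableEquiv.toLp 2 (Fin (D - d) → ℝ)).symm)) volume volume := by
      rw [show (volume : Measure (EuclideanSpace ℝ (Fin d) × EuclideanSpace ℝ (Fin (D - d))))
            = (volume : Measure (EuclideanSpace ℝ (Fin d))).prod volume from rfl,
          show (volume : Measure ((Fin d → ℝ) × (Fin (D - d) → ℝ)))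
            = (volume : Measure (Fin d → ℝ)).prod volume from rfl]
      exact (EuclideanSpace.volume_preserving_symm_measurableEquiv_toLp (Fin d)).prod
        (EuclideanSpace.volume_preserving_symm_measurableEquiv_toLp (Fin (D - d)))
    have h1 := volume_measurePreserving_sumPiEquivProdPi_symm (fun _ : Fin d ⊕ Fin (D - d) => ℝ)
    have h2 := (EuclideanSpace.volume_preserving_symm_measurableEquiv_toLp (Fin d ⊕ Fin (D - d))).symm
    have h3 := b.measurePreserving_repr_symm
    have h4 := measurePreserving_add_left (volume : Measure (EuclideanSpace ℝ (Fin D))) p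
    exact (((h4.comp h3).comp h2).comp h1).comp h0
  set S : Set (EuclideanSpace ℝ (Fin d) × EuclideanSpace ℝ (Fin (D - d))) :=
    (closedBall 0 R) ×ˢ (closedBall 0 w) with hSdef
  set T : Set (EuclideanSpace ℝ (Fin D)) :=
    tube (L₂ : Set (EuclideanSpace ℝ (Fin D))) w ∩ closedBall x ((1 + ε) * r₀) with hTdef
  have hsub : S ⊆ Ψ ⁻¹' T := by
    rintro ⟨z₁, z₂⟩ ⟨hz₁, hz₂⟩
    simp only [mem_closedBall, dist_zero_right] at hz₁ hz₂
    set u₁ : EuclideanSpace ℝ (Fin d ⊕ Fin (D - d)) :=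
      ((MeasurableEquiv.toLp 2 (Fin d ⊕ Fin (D - d) → ℝ)).symm).symm
        (Sum.elim (fun i => z₁ i) (fun _ => 0)) with hu₁def
    set u₂ : EuclideanSpace ℝ (Fin d ⊕ Fin (D - d)) :=
      ((MeasurableEquiv.toLp 2 (Fin d ⊕ Fin (D - d) → ℝ)).symm).symm
        (Sum.elim (fun _ => 0) (fun j => z₂ j)) with hu₂def
    have hu₁l : ∀ i, u₁ (Sum.inl i) = z₁ i := fun i => rfl
    have hu₁r : ∀ j, u₁ (Sum.inr j) = 0 := fun j => rfl
    have hu₂l : ∀ i, u₂ (Sum.inl i) = 0 := fun i => rfl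
    have hu₂r : ∀ j, u₂ (Sum.inr j) = z₂ j := fun j => rfl
    have huadd : Φ (((MeasurableEquiv.toLp 2 (Fin d → ℝ)).symm) z₁,
        ((MeasurableEquiv.toLp 2 (Fin (D - d) → ℝ)).symm) z₂) = u₁ + u₂ := by
      apply PiLp.ext
      rintro (i | j)
      · show z₁ i = u₁ (Sum.inl i) + u₂ (Sum.inl i)
        rw [hu₁l, hu₂l, add_zero]
      · show z₂ j = u₁ (Sum.inr j) + u₂ (Sum.inr j)
        rw [hu₁r, hu₂r, zero_add]
    set a : EuclideanSpace ℝ (Fin D) := b.repr.symm u₁ with hadef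
    set c : EuclideanSpace ℝ (Fin D) := b.repr.symm u₂ with hcdef
    have hΨz : Ψ (z₁, z₂) = p + (a + c) := by
      show p + b.repr.symm _ = _
      rw [huadd, map_add]
    have ha_mem : a ∈ K := by
      have h : a = ∑ j, u₁ j • b j := (b.sum_repr_symm u₁).symm
      rw [h, Fintype.sum_sum_type]
      apply Submodule.add_mem
      · exact Submodule.sum_mem _ fun i _ => Submodule.smul_mem _ _ (hbmem₁ i)
      · have : ∀ j, u₁ (Sum.inr j) • (b (Sum.inr j) : EuclideanSpace ℝ (Fin D)) = 0 := by
          intro j; rw [hu₁r, zero_smul]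
        simp only [this, Finset.sum_const_zero]
        exact Submodule.zero_mem _
    have hc_mem : c ∈ (Kᗮ : Submodule ℝ (EuclideanSpace ℝ (Fin D))) := by
      have h : c = ∑ j, u₂ j • b j := (b.sum_repr_symm u₂).symm
      rw [h, Fintype.sum_sum_type]
      apply Submodule.add_mem
      · have : ∀ i, u₂ (Sum.inl i) • (b (Sum.inl i) : EuclideanSpace ℝ (Fin D)) = 0 := by
          intro i; rw [hu₂l, zero_smul]
        simp only [this, Finset.sum_const_zero]
        exact Submodule.zero_mem _
      · exact Submodule.sum_mem _ fun j _ => Submodule.smul_mem _ _ (hbmem₂ j)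
    have hnu₁ : ‖u₁‖ = ‖z₁‖ := by
      rw [EuclideanSpace.norm_eq, EuclideanSpace.norm_eq]
      congr 1
      rw [Fintype.sum_sum_type]
      simp only [hu₁l, hu₁r, norm_zero]
      simp
    have hnu₂ : ‖u₂‖ = ‖z₂‖ := by
      rw [EuclideanSpace.norm_eq, EuclideanSpace.norm_eq]
      congr 1
      rw [Fintype.sum_sum_type]
      simp only [hu₂l, hu₂r, norm_zero]
      simp
    have hna : ‖a‖ ≤ R := by
      rw [hadef, LinearIsometryEquiv.norm_map, hnu₁]; exact hz₁
    have hnc : ‖c‖ ≤ w := by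
      rw [hcdef, LinearIsometryEquiv.norm_map, hnu₂]; exact hz₂
    constructor
    · -- tube membership
      have hqL : a + p ∈ L₂ := by
        have := AffineSubspace.vadd_mem_of_mem_direction (ha_mem : a ∈ L₂.direction) hpL
        simpa using this
      have : infDist (Ψ (z₁, z₂)) (L₂ : Set (EuclideanSpace ℝ (Fin D))) ≤ dist (Ψ (z₁, z₂)) (a + p) :=
        infDist_le_dist_of_mem hqL
      refine le_trans this ?_
      rw [dist_eq_norm, hΨz]
      have : p + (a + c) - (a + p) = c := by abel
      rw [this]
      exact hnc
    · -- ball membership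
      rw [mem_closedBall, dist_eq_norm]
      have hveq : Ψ (z₁, z₂) - x = a + (c - (x - p)) := by rw [hΨz]; abel
      have hm_mem : c - (x - p) ∈ (Kᗮ : Submodule ℝ (EuclideanSpace ℝ (Fin D))) :=
        Submodule.sub_mem _ hc_mem hxp_mem
      have hinner : inner ℝ a (c - (x - p)) = (0 : ℝ) :=
        Submodule.inner_right_of_mem_orthogonal ha_mem hm_mem
      have hsq : ‖Ψ (z₁, z₂) - x‖ ^ 2 = ‖a‖ ^ 2 + ‖c - (x - p)‖ ^ 2 := by
        rw [hveq, norm_add_sq_real, hinner]; ring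
      have hnm : ‖c - (x - p)‖ ≤ r₀ + 2 * w := by
        calc ‖c - (x - p)‖ ≤ ‖c‖ + ‖x - p‖ := norm_sub_le _ _
          _ ≤ w + (r₀ + w) := add_le_add hnc hxp
          _ = r₀ + 2 * w := by ring
      have ha2 : ‖a‖ ^ 2 ≤ ε * r₀ ^ 2 := by
        have h1 : ‖a‖ ^ 2 ≤ R ^ 2 := pow_le_pow_left₀ (norm_nonneg a) hna 2
        have h2 : R ^ 2 = ε * r₀ ^ 2 := by rw [hRdef, mul_pow, hsε]
        rw [h2] at h1; exact h1
      have hm2 : ‖c - (x - p)‖ ^ 2 ≤ (r₀ + 2 * w) ^ 2 :=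
        pow_le_pow_left₀ (norm_nonneg _) hnm 2
      exact tube_arith hε hε1 hw hr₀ hwε ha2 hm2 (norm_nonneg _) hsq
  have hTmeas : MeasurableSet T := by
    apply MeasurableSet.inter
    · exact (isClosed_le (continuous_infDist_pt _) continuous_const).measurableSet
    · exact measurableSet_closedBall
  have hvol : volume S ≤ volume T := by
    calc volume S ≤ volume (Ψ ⁻¹' T) := measure_mono hsub
      _ = volume T := hΨmp.measure_preimage hTmeas.nullMeasurableSet
  have hSvol : volume S = ENNReal.ofReal (R ^ d)
      * volume (closedBall (0 : EuclideanSpace ℝ (Fin d)) 1)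
      * (ENNReal.ofReal (w ^ (D - d))
        * volume (closedBall (0 : EuclideanSpace ℝ (Fin (D - d))) 1)) := by
    rw [hSdef, show (volume : Measure (EuclideanSpace ℝ (Fin d) × EuclideanSpace ℝ (Fin (D - d))))
          = (volume : Measure (EuclideanSpace ℝ (Fin d))).prod volume from rfl,
        Measure.prod_prod, Measure.addHaar_closedBall' _ _ hR0,
        Measure.addHaar_closedBall' _ _ hw.le,
        finrank_euclideanSpace_fin, finrank_euclideanSpace_fin]
  have hTne : volume T ≠ ⊤ :=
    ((measure_mono Set.inter_subset_right).trans_lt measure_closedBall_lt_top).ne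
  have hfin := ENNReal.toReal_mono hTne hvol
  rw [hSvol, ENNReal.toReal_mul, ENNReal.toReal_mul, ENNReal.toReal_mul,
    ENNReal.toReal_ofReal (pow_nonneg hR0 _), ENNReal.toReal_ofReal (pow_nonneg hw.le _)] at hfin
  rw [ge_iff_le, show unitBallVol d * (Real.sqrt ε * r₀) ^ d * unitBallVol (D - d) * w ^ (D - d)
      = R ^ d * unitBallVol d * (w ^ (D - d) * unitBallVol (D - d)) from by rw [hRdef]; ring]
  exact hfin
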